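/- arXiv:1704.05745 — 2 statements merged into one kernel-verified Lean document; each statement's English description precedes it below -/
import Mathlib

section
/- Let X be a complete separable metric space, φ a regularity kernel, (Ω, 𝒜, P) a probability space, B : Ω → Set X a random set, and for each k ∈ ℕ let 𝒬_k be a countable family of pairwise disjoint Borel subsets of X with {ω : B(ω) ∩ Q ≠ ∅} measurable and P(B ∩ Q ≠ ∅) > 0 for every Q ∈ 𝒬_k. Assume: (1) there exists a > 0 with a · C_φ(Q) ≤ P(B ∩ Q ≠ ∅) for every Q ∈ 𝒬_k and every k; (2) there exist δ > 0 and c₂, c₃ < ∞ with φ(r) ≤ c₂ · φ(r(1+2δ)) + c₃ for all r > 0; (3) there exists c < ∞ such that whenever Q ∈ 𝒬_k, S ∈ 𝒬_n and max(diam Q, diam S) < δ · dist(Q, S), then P(B ∩ Q ≠ ∅ and B ∩ S ≠ ∅) ≤ c · P(B ∩ Q ≠ ∅) · P(B ∩ S ≠ ∅) · φ(dist(Q, S)); (4) there exists M_δ < ∞ such that for every k and every Q ∈ 𝒬_k, the set {S ∈ 𝒬_k : max(diam Q, diam S) ≥ δ · dist(Q, S)} has at most M_δ elements. Then for every finite Borel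 measure ν on X and every k ∈ ℕ, E( 𝒞_k(ν)(X)² ) ≤ (c·c₂ + 2·a^{-1}·M_δ) · I_φ(ν) + c·c₃·ν(X)². -/
open MeasureTheory Filter Set Topology Classical

/-- The `φ`-energy of a Borel measure: `I_φ(ν) = ∫∫ φ(d(x,y)) dν(x) dν(y)`. -/
noncomputable def phiEnergy {X : Type*} [MetricSpace X] [MeasurableSpace X]
    (φ : ℝ → ENNReal) (ν : Measure X) : ENNReal :=
  ∫⁻ x, ∫⁻ y, φ (dist x y) ∂ν ∂ν

/-- The `φ`-capacity of a set `K`: the supremum of `I_φ(τ)⁻¹` over Borel probability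
measures `τ` supported in `K` (value `0` if there is no such measure). -/
noncomputable def phiCapacity {X : Type*} [MetricSpace X] [MeasurableSpace X]
    (φ : ℝ → ENNReal) (K : Set X) : ENNReal :=
  ⨆ (τ : Measure X) (_ : IsProbabilityMeasure τ) (_ : τ Kᶜ = 0), (phiEnergy φ τ)⁻¹

/-- The (extended) distance between two sets: `inf {edist x y : x ∈ Q, y ∈ S}`. -/
noncomputable def setEDist {X : Type*} [PseudoEMetricSpace X] (Q S : Set X) : ENNReal :=
  ⨅ (x ∈ Q) (y ∈ S), edist x y

/-- `𝒞_k(ν)(A)(ω) = Σ_{Q ∈ 𝒬} P(B∩Q≠∅)⁻¹ · 1_{B(ω)∩Q≠∅} · ν(Q∩A)`, the conditional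
measure approximation associated with a family `𝒬` of sets. -/
noncomputable def condCk {X Ω : Type*} [MeasurableSpace X] [MeasurableSpace Ω]
    (P : Measure Ω) (B : Ω → Set X) (𝒬 : Set (Set X)) (ν : Measure X) (A : Set X)
    (ω : Ω) : ENNReal :=
  ∑' Q : 𝒬, (P {ω' | (B ω' ∩ (Q : Set X)).Nonempty})⁻¹ *
    (if (B ω ∩ (Q : Set X)).Nonempty then ν ((Q : Set X) ∩ A) else 0)

/-! ### Auxiliary lemmas -/

lemma tsum_ite_le_of_encard_le {ι : Type*} (p : ι → Prop) [DecidablePred p] (x : ENNReal) (n : ℕ)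
    (h : {i | p i}.encard ≤ (n : ℕ∞)) :
    ∑' i, (if p i then x else 0) ≤ (n : ENNReal) * x := by
  have hfin : {i | p i}.Finite := Set.finite_of_encard_le_coe h
  have heq : ∑' i, (if p i then x else 0) = ∑ i ∈ hfin.toFinset, x := by
    rw [tsum_eq_sum (s := hfin.toFinset)]
    · exact Finset.sum_congr rfl fun i hi => by
        exact if_pos (show p i from hfin.mem_toFinset.mp hi)
    · intro i hi
      simp only [ite_eq_right_iff]
      exact fun hp => absurd (hfin.mem_toFinset.mpr hp) hi
  rw [heq, Finset.sum_const, nsmul_eq_mul]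
  have hcard : (hfin.toFinset.card : ℕ∞) ≤ (n : ℕ∞) := by
    rwa [← Set.Finite.encard_eq_coe_toFinset_card hfin]
  have : (hfin.toFinset.card : ENNReal) ≤ (n : ENNReal) := by exact_mod_cast hcard
  exact mul_le_mul_left this x

lemma setEDist_comm {X : Type*} [PseudoEMetricSpace X] (Q S : Set X) :
    setEDist Q S = setEDist S Q := by
  have h : ∀ (A B : Set X), setEDist A B ≤ setEDist B A := by
    intro A B
    refine le_iInf₂ fun y hy => le_iInf₂ fun x hx => ?_
    rw [edist_comm]
    exact iInf₂_le_of_le x hx (iInf₂_le y hy)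
  exact le_antisymm (h Q S) (h S Q)

lemma edist_le_diam_add_setEDist {X : Type*} [PseudoEMetricSpace X] {Q S : Set X}
    {x y : X} (hx : x ∈ Q) (hy : y ∈ S) :
    edist x y ≤ setEDist Q S + (EMetric.diam Q + EMetric.diam S) := by
  rw [← tsub_le_iff_right]
  refine le_iInf₂ fun x' hx' => le_iInf₂ fun y' hy' => tsub_le_iff_right.mpr ?_
  calc edist x y ≤ edist x x' + edist x' y' + edist y' y := edist_triangle4 x x' y' y
    _ ≤ EMetric.diam Q + edist x' y' + EMetric.diam S := by
        gcongr
        · exact EMetric.edist_le_diam_of_mem hx hx'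
        · exact EMetric.edist_le_diam_of_mem hy' hy
    _ = edist x' y' + (EMetric.diam Q + EMetric.diam S) := by ring

/-- Expansion of the second moment of `𝒞_k(ν)(X)` as a double sum. -/
lemma condCk_sq_expansion {X Ω : Type*} [MeasurableSpace X] [MeasurableSpace Ω]
    (P : Measure Ω) (B : Ω → Set X) (𝒬 : Set (Set X)) (hcount : 𝒬.Countable)
    (hhit : ∀ Q ∈ 𝒬, MeasurableSet {ω | (B ω ∩ Q).Nonempty}) (ν : Measure X) :
    ∫⁻ ω, (condCk P B 𝒬 ν Set.univ ω) ^ 2 ∂P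
      = ∑' (Q : 𝒬) (S : 𝒬),
          (P {ω' | (B ω' ∩ (Q : Set X)).Nonempty})⁻¹ *
          (P {ω' | (B ω' ∩ (S : Set X)).Nonempty})⁻¹ *
          P {ω | (B ω ∩ (Q : Set X)).Nonempty ∧ (B ω ∩ (S : Set X)).Nonempty} *
          ν (Q : Set X) * ν (S : Set X) := by
  classical
  have hc : Countable ↥𝒬 := hcount.to_subtype
  set f : ↥𝒬 → Ω → ENNReal := fun Q ω =>
    (P {ω' | (B ω' ∩ (Q : Set X)).Nonempty})⁻¹ *
      (if (B ω ∩ (Q : Set X)).Nonempty then ν ((Q : Set X) ∩ Set.univ) else 0) with hf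
  have hmeas : ∀ Q : ↥𝒬, Measurable (f Q) := by
    intro Q
    apply Measurable.const_mul
    exact Measurable.ite (hhit Q Q.2) measurable_const measurable_const
  have hsq : ∀ ω, (condCk P B 𝒬 ν Set.univ ω) ^ 2 = ∑' (Q : 𝒬) (S : 𝒬), f Q ω * f S ω := by
    intro ω
    rw [pow_two]
    show (∑' Q, f Q ω) * (∑' S, f S ω) = _
    rw [← ENNReal.tsum_mul_right]
    exact tsum_congr fun Q => ENNReal.tsum_mul_left.symm
  calc ∫⁻ ω, (condCk P B 𝒬 ν Set.univ ω) ^ 2 ∂P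
      = ∫⁻ ω, ∑' (Q : 𝒬) (S : 𝒬), f Q ω * f S ω ∂P := lintegral_congr hsq
    _ = ∑' (Q : 𝒬), ∫⁻ ω, ∑' (S : 𝒬), f Q ω * f S ω ∂P :=
        lintegral_tsum fun Q =>
          (Measurable.ennreal_tsum fun S => (hmeas Q).mul (hmeas S)).aemeasurable
    _ = ∑' (Q : 𝒬) (S : 𝒬), ∫⁻ ω, f Q ω * f S ω ∂P :=
        tsum_congr fun Q => lintegral_tsum fun S => ((hmeas Q).mul (hmeas S)).aemeasurable
    _ = _ := by
        refine tsum_congr fun Q => tsum_congr fun S => ?_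
        have hind : ∀ ω, f Q ω * f S ω =
            Set.indicator ({ω | (B ω ∩ (Q : Set X)).Nonempty} ∩
                {ω | (B ω ∩ (S : Set X)).Nonempty})
              (fun _ => (P {ω' | (B ω' ∩ (Q : Set X)).Nonempty})⁻¹ * ν ((Q : Set X) ∩ Set.univ) *
                ((P {ω' | (B ω' ∩ (S : Set X)).Nonempty})⁻¹ * ν ((S : Set X) ∩ Set.univ))) ω := by
          intro ω
          by_cases h1 : (B ω ∩ (Q : Set X)).Nonempty <;>
            by_cases h2 : (B ω ∩ (S : Set X)).Nonempty <;>
            simp [hf, Set.indicator, h1, h2, mul_comm, mul_assoc, mul_left_comm]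
        rw [lintegral_congr hind,
          lintegral_indicator_const ((hhit Q Q.2).inter (hhit S S.2))]
        rw [show ({ω | (B ω ∩ (Q : Set X)).Nonempty} ∩ {ω | (B ω ∩ (S : Set X)).Nonempty})
            = {ω | (B ω ∩ (Q : Set X)).Nonempty ∧ (B ω ∩ (S : Set X)).Nonempty} from
            (Set.setOf_and).symm]
        rw [Set.inter_univ, Set.inter_univ]
        ring

/-- Sum of set integrals over a countable disjoint family is at most the full integral. -/
lemma tsum_setLIntegral_le {X : Type*} [MeasurableSpace X] (ν : Measure X)
    (𝒬 : Set (Set X)) (hcount : 𝒬.Countable)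
    (hmeas : ∀ Q ∈ 𝒬, MeasurableSet Q)
    (hdisj : ∀ Q ∈ 𝒬, ∀ S ∈ 𝒬, Q ≠ S → Q ∩ S = ∅)
    (H : X → ENNReal) :
    ∑' Q : 𝒬, ∫⁻ x in (Q : Set X), H x ∂ν ≤ ∫⁻ x, H x ∂ν := by
  have hc : Countable ↥𝒬 := hcount.to_subtype
  have hpd : Pairwise (Function.onFun Disjoint fun Q : ↥𝒬 => (Q : Set X)) := by
    intro Q S hQS
    have hne : (Q : Set X) ≠ (S : Set X) := fun h => hQS (Subtype.ext h)
    exact Set.disjoint_iff_inter_eq_empty.mpr (hdisj Q Q.2 S S.2 hne)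
  have h1 : ∑' Q : ↥𝒬, ∫⁻ x in (Q : Set X), H x ∂ν
      = ∫⁻ x in ⋃ Q : ↥𝒬, (Q : Set X), H x ∂ν := by
    rw [Measure.restrict_iUnion hpd fun Q => hmeas Q Q.2, lintegral_sum_measure]
  rw [h1]
  exact lintegral_mono' Measure.restrict_le_self le_rfl

/-- Sum of measures of a countable disjoint family is at most the total mass. -/
lemma tsum_measure_subtype_le {X : Type*} [MeasurableSpace X] (ν : Measure X)
    (𝒬 : Set (Set X)) (hcount : 𝒬.Countable)
    (hmeas : ∀ Q ∈ 𝒬, MeasurableSet Q)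
    (hdisj : ∀ Q ∈ 𝒬, ∀ S ∈ 𝒬, Q ≠ S → Q ∩ S = ∅) :
    ∑' Q : 𝒬, ν (Q : Set X) ≤ ν Set.univ := by
  have := tsum_setLIntegral_le ν 𝒬 hcount hmeas hdisj 1
  simpa using this

/-- The capacity lower bound turns into an energy upper bound on `p⁻¹ ν(Q)²`. -/
lemma inv_hit_mul_sq_le {X : Type*} [MetricSpace X] [MeasurableSpace X]
    (φ : ℝ → ENNReal) (ν : Measure X) [IsFiniteMeasure ν]
    {Q : Set X} (hQ : MeasurableSet Q) {p : ENNReal} (hp0 : p ≠ 0)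
    {a : NNReal} (ha : 0 < a)
    (hcap : (a : ENNReal) * phiCapacity φ Q ≤ p) :
    p⁻¹ * ν Q * ν Q ≤ (a : ENNReal)⁻¹ * ∫⁻ x in Q, ∫⁻ y in Q, φ (dist x y) ∂ν ∂ν := by
  by_cases hν : ν Q = 0
  · simp [hν]
  · have hνtop : ν Q ≠ ⊤ := measure_ne_top ν Q
    set τ : Measure X := (ν Q)⁻¹ • ν.restrict Q with hτ
    have hτuniv : τ Set.univ = 1 := by
      rw [hτ, Measure.smul_apply, smul_eq_mul, Measure.restrict_apply MeasurableSet.univ,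
        Set.univ_inter]
      exact ENNReal.inv_mul_cancel hν hνtop
    have hτprob : IsProbabilityMeasure τ := ⟨hτuniv⟩
    have hτK : τ Qᶜ = 0 := by
      rw [hτ, Measure.smul_apply, smul_eq_mul, Measure.restrict_apply hQ.compl,
        Set.compl_inter_self]
      simp
    have hE : phiEnergy φ τ
        = (ν Q)⁻¹ * ((ν Q)⁻¹ * ∫⁻ x in Q, ∫⁻ y in Q, φ (dist x y) ∂ν ∂ν) := by
      rw [phiEnergy, hτ, lintegral_smul_measure]
      congr 1
      rw [← lintegral_const_mul' _ _ (ENNReal.inv_ne_top.mpr hν)]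
      refine lintegral_congr fun x => ?_
      rw [lintegral_smul_measure, smul_eq_mul]
    have hcap2 : (phiEnergy φ τ)⁻¹ ≤ phiCapacity φ Q := by
      rw [phiCapacity]
      exact le_iSup_of_le τ (le_iSup_of_le hτprob (le_iSup_of_le hτK le_rfl))
    have hple : (a : ENNReal) * (phiEnergy φ τ)⁻¹ ≤ p :=
      le_trans (mul_le_mul_right hcap2 _) hcap
    have hinv : p⁻¹ ≤ (a : ENNReal)⁻¹ * phiEnergy φ τ := by
      have := ENNReal.inv_le_inv' hple
      rwa [ENNReal.mul_inv (Or.inl (by exact_mod_cast ha.ne')) (Or.inl ENNReal.coe_ne_top),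
        inv_inv] at this
    calc p⁻¹ * ν Q * ν Q ≤ ((a : ENNReal)⁻¹ * phiEnergy φ τ) * ν Q * ν Q := by gcongr
      _ = (a : ENNReal)⁻¹ * (∫⁻ x in Q, ∫⁻ y in Q, φ (dist x y) ∂ν ∂ν) *
            (((ν Q)⁻¹ * ν Q) * ((ν Q)⁻¹ * ν Q)) := by rw [hE]; ring
      _ = (a : ENNReal)⁻¹ * ∫⁻ x in Q, ∫⁻ y in Q, φ (dist x y) ∂ν ∂ν := by
          rw [ENNReal.inv_mul_cancel hν hνtop]; ring

/-- The per-pair bound: each term in the expansion of the second moment is controlled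
by an energy term, a mass term, and (for near pairs) diagonal-type terms. -/
lemma condCk_pair_bound {X Ω : Type*} [MetricSpace X] [MeasurableSpace X]
    [MeasurableSpace Ω] (P : Measure Ω) [IsProbabilityMeasure P]
    (B : Ω → Set X) (ν : Measure X)
    (φ : ℝ → ENNReal) (hφanti : AntitoneOn φ (Set.Ici (0:ℝ)))
    (δ : ℝ) (hδ : 0 < δ) (c₂ c₃ : NNReal)
    (hker : ∀ r : ℝ, 0 < r → φ r ≤ (c₂ : ENNReal) * φ (r * (1 + 2 * δ)) + (c₃ : ENNReal))
    (c : NNReal)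
    {Q S : Set X} (hQm : MeasurableSet Q) (hSm : MeasurableSet S)
    (hpQ : P {ω' | (B ω' ∩ Q).Nonempty} ≠ 0)
    (hpS : P {ω' | (B ω' ∩ S).Nonempty} ≠ 0)
    (hind : max (EMetric.diam Q) (EMetric.diam S) < ENNReal.ofReal δ * setEDist Q S →
      P {ω | (B ω ∩ Q).Nonempty ∧ (B ω ∩ S).Nonempty}
        ≤ (c : ENNReal) * P {ω' | (B ω' ∩ Q).Nonempty} * P {ω' | (B ω' ∩ S).Nonempty} *
            φ (setEDist Q S).toReal) :
    (P {ω' | (B ω' ∩ Q).Nonempty})⁻¹ * (P {ω' | (B ω' ∩ S).Nonempty})⁻¹ *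
        P {ω | (B ω ∩ Q).Nonempty ∧ (B ω ∩ S).Nonempty} * ν Q * ν S
      ≤ (c : ENNReal) * (c₂ : ENNReal) * (∫⁻ x in Q, ∫⁻ y in S, φ (dist x y) ∂ν ∂ν)
        + (c : ENNReal) * (c₃ : ENNReal) * (ν Q * ν S)
        + (if ENNReal.ofReal δ * setEDist Q S ≤ max (EMetric.diam Q) (EMetric.diam S)
            then (P {ω' | (B ω' ∩ Q).Nonempty})⁻¹ * ν Q * ν Q
              + (P {ω' | (B ω' ∩ S).Nonempty})⁻¹ * ν S * ν S
            else 0) := by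
  classical
  set pQ := P {ω' | (B ω' ∩ Q).Nonempty} with hpQdef
  set pS := P {ω' | (B ω' ∩ S).Nonempty} with hpSdef
  set Pb := P {ω | (B ω ∩ Q).Nonempty ∧ (B ω ∩ S).Nonempty} with hPbdef
  have hpQtop : pQ ≠ ⊤ := measure_ne_top P _
  have hpStop : pS ≠ ⊤ := measure_ne_top P _
  have hPbQ : Pb ≤ pQ := measure_mono fun ω h => h.1
  have hPbS : Pb ≤ pS := measure_mono fun ω h => h.2
  by_cases hnear : ENNReal.ofReal δ * setEDist Q S ≤ max (EMetric.diam Q) (EMetric.diam S)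
  · rw [if_pos hnear]
    have hkey : pQ⁻¹ * pS⁻¹ * Pb * ν Q * ν S
        ≤ pQ⁻¹ * ν Q * ν Q + pS⁻¹ * ν S * ν S := by
      rcases le_total (ν Q) (ν S) with hν | hν
      · calc pQ⁻¹ * pS⁻¹ * Pb * ν Q * ν S ≤ pQ⁻¹ * pS⁻¹ * pQ * ν S * ν S := by gcongr
          _ = pS⁻¹ * ν S * ν S * (pQ⁻¹ * pQ) := by ring
          _ = pS⁻¹ * ν S * ν S := by rw [ENNReal.inv_mul_cancel hpQ hpQtop, mul_one]
          _ ≤ _ := le_add_self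
      · calc pQ⁻¹ * pS⁻¹ * Pb * ν Q * ν S ≤ pQ⁻¹ * pS⁻¹ * pS * ν Q * ν Q := by gcongr
          _ = pQ⁻¹ * ν Q * ν Q * (pS⁻¹ * pS) := by ring
          _ = pQ⁻¹ * ν Q * ν Q := by rw [ENNReal.inv_mul_cancel hpS hpStop, mul_one]
          _ ≤ _ := le_self_add
    exact le_trans hkey le_add_self
  · rw [if_neg hnear, add_zero]
    have hfar : max (EMetric.diam Q) (EMetric.diam S) < ENNReal.ofReal δ * setEDist Q S :=
      not_le.mp hnear
    by_cases hν0 : ν Q = 0 ∨ ν S = 0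
    · rcases hν0 with h | h <;> simp [h]
    · push_neg at hν0
      have hQne : Q.Nonempty := Set.nonempty_iff_ne_empty.mpr fun h => hν0.1 (by simp [h])
      have hSne : S.Nonempty := Set.nonempty_iff_ne_empty.mpr fun h => hν0.2 (by simp [h])
      set D := setEDist Q S with hDdef
      have hDtop : D ≠ ⊤ := by
        obtain ⟨x, hx⟩ := hQne
        obtain ⟨y, hy⟩ := hSne
        exact ne_top_of_le_ne_top (edist_ne_top x y)
          (iInf₂_le_of_le x hx (iInf₂_le y hy))
      have hD0 : D ≠ 0 := by
        intro h
        rw [h, mul_zero] at hfar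
        exact absurd hfar (not_lt_of_ge (zero_le))
      have hDr : 0 < D.toReal := ENNReal.toReal_pos hD0 hDtop
      have h1 : Pb ≤ (c : ENNReal) * pQ * pS * φ D.toReal := hind hfar
      have hT1 : pQ⁻¹ * pS⁻¹ * Pb * ν Q * ν S
          ≤ (c : ENNReal) * φ D.toReal * (ν Q * ν S) := by
        calc pQ⁻¹ * pS⁻¹ * Pb * ν Q * ν S
            ≤ pQ⁻¹ * pS⁻¹ * ((c : ENNReal) * pQ * pS * φ D.toReal) * ν Q * ν S := by gcongr
          _ = (c : ENNReal) * φ D.toReal * (ν Q * ν S) * ((pQ⁻¹ * pQ) * (pS⁻¹ * pS)) := by ring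
          _ = (c : ENNReal) * φ D.toReal * (ν Q * ν S) := by
              rw [ENNReal.inv_mul_cancel hpQ hpQtop, ENNReal.inv_mul_cancel hpS hpStop,
                one_mul, mul_one]
      have hφD : φ D.toReal ≤ (c₂ : ENNReal) * φ (D.toReal * (1 + 2 * δ)) + (c₃ : ENNReal) :=
        hker _ hDr
      have hc0 : 0 < D.toReal * (1 + 2 * δ) := by positivity
      have hdist : ∀ x ∈ Q, ∀ y ∈ S, dist x y ≤ D.toReal * (1 + 2 * δ) := by
        intro x hx y hy
        have he : edist x y ≤ ENNReal.ofReal (1 + 2 * δ) * D := by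
          calc edist x y ≤ D + (EMetric.diam Q + EMetric.diam S) :=
              edist_le_diam_add_setEDist hx hy
            _ ≤ D + (ENNReal.ofReal δ * D + ENNReal.ofReal δ * D) := by
                gcongr
                · exact le_of_lt (lt_of_le_of_lt (le_max_left _ _) hfar)
                · exact le_of_lt (lt_of_le_of_lt (le_max_right _ _) hfar)
            _ = (1 + 2 * ENNReal.ofReal δ) * D := by ring
            _ = ENNReal.ofReal (1 + 2 * δ) * D := by
                rw [ENNReal.ofReal_add one_pos.le (by positivity), ENNReal.ofReal_one,
                  ENNReal.ofReal_mul two_pos.le]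
                norm_num
        rw [dist_edist]
        calc (edist x y).toReal ≤ (ENNReal.ofReal (1 + 2 * δ) * D).toReal :=
            ENNReal.toReal_mono (ENNReal.mul_ne_top ENNReal.ofReal_ne_top hDtop) he
          _ = (1 + 2 * δ) * D.toReal := by
              rw [ENNReal.toReal_mul, ENNReal.toReal_ofReal (by positivity)]
          _ = D.toReal * (1 + 2 * δ) := mul_comm _ _
      have hpt : ∀ x ∈ Q, ∀ y ∈ S, φ (D.toReal * (1 + 2 * δ)) ≤ φ (dist x y) :=
        fun x hx y hy => hφanti dist_nonneg hc0.le (hdist x hx y hy)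
      have hE : φ (D.toReal * (1 + 2 * δ)) * (ν Q * ν S)
          ≤ ∫⁻ x in Q, ∫⁻ y in S, φ (dist x y) ∂ν ∂ν := by
        have inner : ∀ x ∈ Q, φ (D.toReal * (1 + 2 * δ)) * ν S
            ≤ ∫⁻ y in S, φ (dist x y) ∂ν := by
          intro x hx
          rw [← setLIntegral_const S (φ (D.toReal * (1 + 2 * δ)))]
          exact lintegral_mono_ae ((ae_restrict_iff' hSm).mpr
            (ae_of_all _ fun y hy => hpt x hx y hy))
        calc φ (D.toReal * (1 + 2 * δ)) * (ν Q * ν S)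
            = ∫⁻ _ in Q, φ (D.toReal * (1 + 2 * δ)) * ν S ∂ν := by
              rw [setLIntegral_const]; ring
          _ ≤ ∫⁻ x in Q, ∫⁻ y in S, φ (dist x y) ∂ν ∂ν :=
              lintegral_mono_ae ((ae_restrict_iff' hQm).mpr (ae_of_all _ inner))
      calc pQ⁻¹ * pS⁻¹ * Pb * ν Q * ν S ≤ (c : ENNReal) * φ D.toReal * (ν Q * ν S) := hT1
        _ ≤ (c : ENNReal) * ((c₂ : ENNReal) * φ (D.toReal * (1 + 2 * δ)) + (c₃ : ENNReal)) *
              (ν Q * ν S) := by gcongr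
        _ = (c : ENNReal) * (c₂ : ENNReal) * (φ (D.toReal * (1 + 2 * δ)) * (ν Q * ν S))
            + (c : ENNReal) * (c₃ : ENNReal) * (ν Q * ν S) := by ring
        _ ≤ _ := by gcongr

/-- **`L²`-boundedness of the approximating conditional measures.**  Under the standing
assumptions on the kernel `φ`, the families `𝒬_k` and the random set `B` (capacity lower
bound for hitting probabilities, kernel doubling, correlation bound, bounded number of
`δ`-close pairs), for every finite Borel measure `ν` and every `k`,
`E(𝒞_k(ν)(X)²) ≤ (c·c₂ + 2a⁻¹·M_δ)·I_φ(ν) + c·c₃·ν(X)²`. -/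
theorem condCk_sq_expectation_le
    {X : Type*} [MetricSpace X] [CompleteSpace X] [TopologicalSpace.SeparableSpace X]
    [MeasurableSpace X] [BorelSpace X]
    {Ω : Type*} [MeasurableSpace Ω] (P : Measure Ω) [IsProbabilityMeasure P]
    (B : Ω → Set X) (𝒬 : ℕ → Set (Set X))
    (hcount : ∀ k, (𝒬 k).Countable)
    (hQmeas : ∀ k, ∀ Q ∈ 𝒬 k, MeasurableSet Q)
    (hQdisj : ∀ k, ∀ Q ∈ 𝒬 k, ∀ S ∈ 𝒬 k, Q ≠ S → Q ∩ S = ∅)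
    (hhitmeas : ∀ k, ∀ Q ∈ 𝒬 k, MeasurableSet {ω | (B ω ∩ Q).Nonempty})
    (hhitpos : ∀ k, ∀ Q ∈ 𝒬 k, 0 < P {ω | (B ω ∩ Q).Nonempty})
    (φ : ℝ → ENNReal)
    (hφcont : ContinuousOn φ (Set.Ici (0 : ℝ)))
    (hφanti : AntitoneOn φ (Set.Ici (0 : ℝ)))
    (hφfin : ∀ r : ℝ, 0 < r → φ r ≠ ⊤)
    (a : NNReal) (ha : 0 < a)
    (hcap : ∀ k, ∀ Q ∈ 𝒬 k,
      (a : ENNReal) * phiCapacity φ Q ≤ P {ω | (B ω ∩ Q).Nonempty})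
    (δ : ℝ) (hδ : 0 < δ)
    (c₂ c₃ : NNReal)
    (hker : ∀ r : ℝ, 0 < r → φ r ≤ (c₂ : ENNReal) * φ (r * (1 + 2 * δ)) + (c₃ : ENNReal))
    (c : NNReal)
    (hindep : ∀ k n : ℕ, ∀ Q ∈ 𝒬 k, ∀ S ∈ 𝒬 n,
      max (EMetric.diam Q) (EMetric.diam S) < ENNReal.ofReal δ * setEDist Q S →
      P {ω | (B ω ∩ Q).Nonempty ∧ (B ω ∩ S).Nonempty}
        ≤ (c : ENNReal) * P {ω | (B ω ∩ Q).Nonempty} * P {ω | (B ω ∩ S).Nonempty} *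
            φ (setEDist Q S).toReal)
    (Mδ : ℕ)
    (hMδ : ∀ k, ∀ Q ∈ 𝒬 k,
      {S | S ∈ 𝒬 k ∧
        ENNReal.ofReal δ * setEDist Q S ≤ max (EMetric.diam Q) (EMetric.diam S)}.encard
        ≤ (Mδ : ℕ∞))
    (ν : Measure X) [IsFiniteMeasure ν] (k : ℕ) :
    ∫⁻ ω, (condCk P B (𝒬 k) ν Set.univ ω) ^ 2 ∂P
      ≤ ((c : ENNReal) * (c₂ : ENNReal) + 2 * (a : ENNReal)⁻¹ * (Mδ : ENNReal)) *
          phiEnergy φ ν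
        + (c : ENNReal) * (c₃ : ENNReal) * (ν Set.univ) ^ 2 := by
  classical
  have hc : Countable ↥(𝒬 k) := (hcount k).to_subtype
  have hcont2 : Continuous fun p : X × X => φ (dist p.1 p.2) :=
    hφcont.comp_continuous continuous_dist fun p => dist_nonneg
  have hjm : Measurable (Function.uncurry fun x y : X => φ (dist x y)) := hcont2.measurable
  rw [condCk_sq_expansion P B (𝒬 k) (hcount k) (hhitmeas k) ν]
  -- the three building blocks
  have key1 : ∑' (Q : 𝒬 k) (S : 𝒬 k),
      (∫⁻ x in (Q : Set X), ∫⁻ y in (S : Set X), φ (dist x y) ∂ν ∂ν) ≤ phiEnergy φ ν := by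
    have inner : ∀ Q : 𝒬 k, (∑' (S : 𝒬 k),
        ∫⁻ x in (Q : Set X), ∫⁻ y in (S : Set X), φ (dist x y) ∂ν ∂ν)
        ≤ ∫⁻ x in (Q : Set X), ∫⁻ y, φ (dist x y) ∂ν ∂ν := by
      intro Q
      rw [← lintegral_tsum fun S : 𝒬 k =>
        (Measurable.lintegral_prod_right (ν := ν.restrict (S : Set X)) hjm).aemeasurable]
      exact lintegral_mono fun x =>
        tsum_setLIntegral_le ν (𝒬 k) (hcount k) (hQmeas k) (hQdisj k) _
    exact le_trans (ENNReal.tsum_le_tsum inner)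
      (tsum_setLIntegral_le ν (𝒬 k) (hcount k) (hQmeas k) (hQdisj k) _)
  have key2 : ∑' Q : 𝒬 k, ν (Q : Set X) ≤ ν Set.univ :=
    tsum_measure_subtype_le ν (𝒬 k) (hcount k) (hQmeas k) (hQdisj k)
  have keyA : ∑' Q : 𝒬 k,
      (P {ω' | (B ω' ∩ (Q : Set X)).Nonempty})⁻¹ * ν (Q : Set X) * ν (Q : Set X)
      ≤ (a : ENNReal)⁻¹ * phiEnergy φ ν := by
    have per : ∀ Q : 𝒬 k,
        (P {ω' | (B ω' ∩ (Q : Set X)).Nonempty})⁻¹ * ν (Q : Set X) * ν (Q : Set X)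
        ≤ (a : ENNReal)⁻¹ * ∫⁻ x in (Q : Set X), ∫⁻ y, φ (dist x y) ∂ν ∂ν := by
      intro Q
      refine le_trans (inv_hit_mul_sq_le φ ν (hQmeas k _ Q.2) (hhitpos k _ Q.2).ne'
        ha (hcap k _ Q.2)) ?_
      exact mul_le_mul_right (lintegral_mono fun x =>
        lintegral_mono' Measure.restrict_le_self le_rfl) _
    calc _ ≤ ∑' Q : 𝒬 k, (a : ENNReal)⁻¹ *
          ∫⁻ x in (Q : Set X), ∫⁻ y, φ (dist x y) ∂ν ∂ν := ENNReal.tsum_le_tsum per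
      _ = (a : ENNReal)⁻¹ * ∑' Q : 𝒬 k,
          ∫⁻ x in (Q : Set X), ∫⁻ y, φ (dist x y) ∂ν ∂ν := ENNReal.tsum_mul_left
      _ ≤ (a : ENNReal)⁻¹ * phiEnergy φ ν :=
        mul_le_mul_right (tsum_setLIntegral_le ν (𝒬 k) (hcount k) (hQmeas k) (hQdisj k) _) _
  -- counting near pairs
  have keycard1 : ∀ Q : 𝒬 k,
      {S : 𝒬 k | ENNReal.ofReal δ * setEDist (Q : Set X) (S : Set X)
        ≤ max (EMetric.diam (Q : Set X)) (EMetric.diam (S : Set X))}.encard ≤ (Mδ : ℕ∞) := by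
    intro Q
    have himg : Subtype.val '' {S : 𝒬 k | ENNReal.ofReal δ * setEDist (Q : Set X) (S : Set X)
          ≤ max (EMetric.diam (Q : Set X)) (EMetric.diam (S : Set X))}
        = {S | S ∈ 𝒬 k ∧ ENNReal.ofReal δ * setEDist (Q : Set X) S
            ≤ max (EMetric.diam (Q : Set X)) (EMetric.diam S)} := by
      ext T
      constructor
      · rintro ⟨S, hS, rfl⟩
        exact ⟨S.2, hS⟩
      · rintro ⟨hT, hn⟩
        exact ⟨⟨T, hT⟩, hn, rfl⟩
    calc {S : 𝒬 k | ENNReal.ofReal δ * setEDist (Q : Set X) (S : Set X)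
          ≤ max (EMetric.diam (Q : Set X)) (EMetric.diam (S : Set X))}.encard
        = (Subtype.val '' {S : 𝒬 k | ENNReal.ofReal δ * setEDist (Q : Set X) (S : Set X)
          ≤ max (EMetric.diam (Q : Set X)) (EMetric.diam (S : Set X))}).encard :=
          (Set.InjOn.encard_image (Subtype.val_injective.injOn)).symm
      _ ≤ (Mδ : ℕ∞) := by rw [himg]; exact hMδ k _ Q.2
  have keycard2 : ∀ S : 𝒬 k,
      {Q : 𝒬 k | ENNReal.ofReal δ * setEDist (Q : Set X) (S : Set X)
        ≤ max (EMetric.diam (Q : Set X)) (EMetric.diam (S : Set X))}.encard ≤ (Mδ : ℕ∞) := by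
    intro S
    have hsymm : ∀ Q : 𝒬 k, (ENNReal.ofReal δ * setEDist (Q : Set X) (S : Set X)
        ≤ max (EMetric.diam (Q : Set X)) (EMetric.diam (S : Set X)))
        ↔ (ENNReal.ofReal δ * setEDist (S : Set X) (Q : Set X)
        ≤ max (EMetric.diam (S : Set X)) (EMetric.diam (Q : Set X))) := by
      intro Q
      rw [setEDist_comm, max_comm]
    have himg : Subtype.val '' {Q : 𝒬 k | ENNReal.ofReal δ * setEDist (Q : Set X) (S : Set X)
          ≤ max (EMetric.diam (Q : Set X)) (EMetric.diam (S : Set X))}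
        = {T | T ∈ 𝒬 k ∧ ENNReal.ofReal δ * setEDist (S : Set X) T
            ≤ max (EMetric.diam (S : Set X)) (EMetric.diam T)} := by
      ext T
      constructor
      · rintro ⟨Q, hQ, rfl⟩
        exact ⟨Q.2, (hsymm Q).mp hQ⟩
      · rintro ⟨hT, hn⟩
        exact ⟨⟨T, hT⟩, (hsymm ⟨T, hT⟩).mpr hn, rfl⟩
    calc {Q : 𝒬 k | ENNReal.ofReal δ * setEDist (Q : Set X) (S : Set X)
          ≤ max (EMetric.diam (Q : Set X)) (EMetric.diam (S : Set X))}.encard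
        = (Subtype.val '' {Q : 𝒬 k | ENNReal.ofReal δ * setEDist (Q : Set X) (S : Set X)
          ≤ max (EMetric.diam (Q : Set X)) (EMetric.diam (S : Set X))}).encard :=
          (Set.InjOn.encard_image (Subtype.val_injective.injOn)).symm
      _ ≤ (Mδ : ℕ∞) := by rw [himg]; exact hMδ k _ S.2
  -- per-pair bound
  have hpair : ∀ Q S : 𝒬 k,
      (P {ω' | (B ω' ∩ (Q : Set X)).Nonempty})⁻¹ * (P {ω' | (B ω' ∩ (S : Set X)).Nonempty})⁻¹ *
        P {ω | (B ω ∩ (Q : Set X)).Nonempty ∧ (B ω ∩ (S : Set X)).Nonempty} *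
        ν (Q : Set X) * ν (S : Set X)
      ≤ (c : ENNReal) * (c₂ : ENNReal) *
          (∫⁻ x in (Q : Set X), ∫⁻ y in (S : Set X), φ (dist x y) ∂ν ∂ν)
        + (c : ENNReal) * (c₃ : ENNReal) * (ν (Q : Set X) * ν (S : Set X))
        + (if ENNReal.ofReal δ * setEDist (Q : Set X) (S : Set X)
              ≤ max (EMetric.diam (Q : Set X)) (EMetric.diam (S : Set X))
            then (P {ω' | (B ω' ∩ (Q : Set X)).Nonempty})⁻¹ * ν (Q : Set X) * ν (Q : Set X)
              + (P {ω' | (B ω' ∩ (S : Set X)).Nonempty})⁻¹ * ν (S : Set X) * ν (S : Set X)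
            else 0) := fun Q S =>
    condCk_pair_bound P B ν φ hφanti δ hδ c₂ c₃ hker c (hQmeas k _ Q.2) (hQmeas k _ S.2)
      (hhitpos k _ Q.2).ne' (hhitpos k _ S.2).ne' (hindep k k _ Q.2 _ S.2)
  refine le_trans (ENNReal.tsum_le_tsum fun Q => ENNReal.tsum_le_tsum fun S => hpair Q S) ?_
  -- split the triple sum
  simp only [ENNReal.tsum_add]
  have H1 : ∑' (Q : 𝒬 k) (S : 𝒬 k), (c : ENNReal) * (c₂ : ENNReal) *
      (∫⁻ x in (Q : Set X), ∫⁻ y in (S : Set X), φ (dist x y) ∂ν ∂ν)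
      ≤ (c : ENNReal) * (c₂ : ENNReal) * phiEnergy φ ν := by
    simp only [ENNReal.tsum_mul_left]
    exact mul_le_mul_right key1 _
  have H2 : ∑' (Q : 𝒬 k) (S : 𝒬 k), (c : ENNReal) * (c₃ : ENNReal) *
      (ν (Q : Set X) * ν (S : Set X))
      ≤ (c : ENNReal) * (c₃ : ENNReal) * (ν Set.univ * ν Set.univ) := by
    simp only [ENNReal.tsum_mul_left, ENNReal.tsum_mul_right]
    exact mul_le_mul_right (mul_le_mul' key2 key2) _
  have H3 : ∑' (Q : 𝒬 k) (S : 𝒬 k),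
      (if ENNReal.ofReal δ * setEDist (Q : Set X) (S : Set X)
          ≤ max (EMetric.diam (Q : Set X)) (EMetric.diam (S : Set X))
        then (P {ω' | (B ω' ∩ (Q : Set X)).Nonempty})⁻¹ * ν (Q : Set X) * ν (Q : Set X)
          + (P {ω' | (B ω' ∩ (S : Set X)).Nonempty})⁻¹ * ν (S : Set X) * ν (S : Set X)
        else 0)
      ≤ (Mδ : ENNReal) * ((a : ENNReal)⁻¹ * phiEnergy φ ν)
        + (Mδ : ENNReal) * ((a : ENNReal)⁻¹ * phiEnergy φ ν) := by
    have hsplit : ∀ Q S : 𝒬 k,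
        (if ENNReal.ofReal δ * setEDist (Q : Set X) (S : Set X)
            ≤ max (EMetric.diam (Q : Set X)) (EMetric.diam (S : Set X))
          then (P {ω' | (B ω' ∩ (Q : Set X)).Nonempty})⁻¹ * ν (Q : Set X) * ν (Q : Set X)
            + (P {ω' | (B ω' ∩ (S : Set X)).Nonempty})⁻¹ * ν (S : Set X) * ν (S : Set X)
          else 0)
        = (if ENNReal.ofReal δ * setEDist (Q : Set X) (S : Set X)
            ≤ max (EMetric.diam (Q : Set X)) (EMetric.diam (S : Set X))
          then (P {ω' | (B ω' ∩ (Q : Set X)).Nonempty})⁻¹ * ν (Q : Set X) * ν (Q : Set X)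
          else 0)
        + (if ENNReal.ofReal δ * setEDist (Q : Set X) (S : Set X)
            ≤ max (EMetric.diam (Q : Set X)) (EMetric.diam (S : Set X))
          then (P {ω' | (B ω' ∩ (S : Set X)).Nonempty})⁻¹ * ν (S : Set X) * ν (S : Set X)
          else 0) := by
      intro Q S
      split <;> simp
    calc ∑' (Q : 𝒬 k) (S : 𝒬 k), _
        = ∑' (Q : 𝒬 k) (S : 𝒬 k),
          ((if ENNReal.ofReal δ * setEDist (Q : Set X) (S : Set X)
              ≤ max (EMetric.diam (Q : Set X)) (EMetric.diam (S : Set X))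
            then (P {ω' | (B ω' ∩ (Q : Set X)).Nonempty})⁻¹ * ν (Q : Set X) * ν (Q : Set X)
            else 0)
          + (if ENNReal.ofReal δ * setEDist (Q : Set X) (S : Set X)
              ≤ max (EMetric.diam (Q : Set X)) (EMetric.diam (S : Set X))
            then (P {ω' | (B ω' ∩ (S : Set X)).Nonempty})⁻¹ * ν (S : Set X) * ν (S : Set X)
            else 0)) := tsum_congr fun Q => tsum_congr fun S => hsplit Q S
      _ = (∑' (Q : 𝒬 k) (S : 𝒬 k),
          (if ENNReal.ofReal δ * setEDist (Q : Set X) (S : Set X)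
              ≤ max (EMetric.diam (Q : Set X)) (EMetric.diam (S : Set X))
            then (P {ω' | (B ω' ∩ (Q : Set X)).Nonempty})⁻¹ * ν (Q : Set X) * ν (Q : Set X)
            else 0))
        + ∑' (Q : 𝒬 k) (S : 𝒬 k),
          (if ENNReal.ofReal δ * setEDist (Q : Set X) (S : Set X)
              ≤ max (EMetric.diam (Q : Set X)) (EMetric.diam (S : Set X))
            then (P {ω' | (B ω' ∩ (S : Set X)).Nonempty})⁻¹ * ν (S : Set X) * ν (S : Set X)
            else 0) := by simp only [ENNReal.tsum_add]
      _ ≤ _ := by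
          gcongr
          · calc ∑' (Q : 𝒬 k) (S : 𝒬 k),
                (if ENNReal.ofReal δ * setEDist (Q : Set X) (S : Set X)
                    ≤ max (EMetric.diam (Q : Set X)) (EMetric.diam (S : Set X))
                  then (P {ω' | (B ω' ∩ (Q : Set X)).Nonempty})⁻¹ * ν (Q : Set X) * ν (Q : Set X)
                  else 0)
                ≤ ∑' Q : 𝒬 k, (Mδ : ENNReal) *
                  ((P {ω' | (B ω' ∩ (Q : Set X)).Nonempty})⁻¹ * ν (Q : Set X) * ν (Q : Set X)) :=
                ENNReal.tsum_le_tsum fun Q => tsum_ite_le_of_encard_le _ _ Mδ (keycard1 Q)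
              _ = (Mδ : ENNReal) * ∑' Q : 𝒬 k,
                  (P {ω' | (B ω' ∩ (Q : Set X)).Nonempty})⁻¹ * ν (Q : Set X) * ν (Q : Set X) :=
                ENNReal.tsum_mul_left
              _ ≤ (Mδ : ENNReal) * ((a : ENNReal)⁻¹ * phiEnergy φ ν) :=
                mul_le_mul_right keyA _
          · rw [ENNReal.tsum_comm]
            calc ∑' (S : 𝒬 k) (Q : 𝒬 k),
                (if ENNReal.ofReal δ * setEDist (Q : Set X) (S : Set X)
                    ≤ max (EMetric.diam (Q : Set X)) (EMetric.diam (S : Set X))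
                  then (P {ω' | (B ω' ∩ (S : Set X)).Nonempty})⁻¹ * ν (S : Set X) * ν (S : Set X)
                  else 0)
                ≤ ∑' S : 𝒬 k, (Mδ : ENNReal) *
                  ((P {ω' | (B ω' ∩ (S : Set X)).Nonempty})⁻¹ * ν (S : Set X) * ν (S : Set X)) :=
                ENNReal.tsum_le_tsum fun S => tsum_ite_le_of_encard_le _ _ Mδ (keycard2 S)
              _ = (Mδ : ENNReal) * ∑' S : 𝒬 k,
                  (P {ω' | (B ω' ∩ (S : Set X)).Nonempty})⁻¹ * ν (S : Set X) * ν (S : Set X) :=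
                ENNReal.tsum_mul_left
              _ ≤ (Mδ : ENNReal) * ((a : ENNReal)⁻¹ * phiEnergy φ ν) :=
                mul_le_mul_right keyA _
  refine le_trans (add_le_add (add_le_add H1 H2) H3) (le_of_eq ?_)
  ring
end

section
/- Let X be a complete separable metric space, (Ω, 𝒜, P) a probability space, ν a finite Borel measure on X, and K : X × X → [0,∞] a nonnegative Borel function; write I_K(τ) = ∫∫ K(x,y) dτ(x) dτ(y). Suppose that to every finite Borel measure τ on X with τ ≪ ν there is assigned a random finite Borel measure 𝒞(τ) on X such that: (1) whenever (ν_i) are finite Borel measures with ν_i ≪ ν and γ_i ≥ 0 satisfy Σ_i γ_i ν_i ≤ ν, then Σ_i γ_i 𝒞(ν_i) ≤ 𝒞(ν) almost surely (as measures); (2) E( 𝒞(τ)(X) ) ≥ τ(X) for every finite Borel measure τ ≪ ν with I_K(τ) < ∞ (this combines the paper's hypotheses that E(𝒞(τ)(X)) is at least the total mass of the φ-regular part of τ and that every measure of finite K-energy has vanishing singular part); (3) E( 𝒞(τ)(X)² ) ≤ I_K(τ) for every finite Borel measure τ ≪ ν. Then P( 𝒞(ν)(X) > 0 ) ≥ C_K(ν),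 where C_K(ν) = sup{ I_K(τ)^{-1} : τ a Borel probability measure on X with τ ≪ ν } (sup ∅ = 0). -/
open MeasureTheory Filter Set Topology

/-- The `K`-energy of a Borel measure `τ` with respect to a nonnegative kernel `K`:
`I_K(τ) = ∫∫ K(x,y) dτ(x) dτ(y)`. -/
noncomputable def kernelEnergy {X : Type*} [MeasurableSpace X]
    (K : X → X → ENNReal) (τ : Measure X) : ENNReal :=
  ∫⁻ x, ∫⁻ y, K x y ∂τ ∂τ

/-- The `K`-capacity of a Borel measure `ν`:
`C_K(ν) = sup { I_K(τ)⁻¹ : τ a probability measure with τ ≪ ν }` (`0` if there is none). -/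
noncomputable def measureCapacity {X : Type*} [MeasurableSpace X]
    (K : X → X → ENNReal) (ν : Measure X) : ENNReal :=
  ⨆ (τ : Measure X) (_ : IsProbabilityMeasure τ) (_ : τ ≪ ν), (kernelEnergy K τ)⁻¹

lemma paley_zygmund {Ω : Type*} [MeasurableSpace Ω] (P : Measure Ω)
    (Z : Ω → ENNReal) (hZ : Measurable Z) :
    (∫⁻ ω, Z ω ∂P) ^ 2 ≤ (∫⁻ ω, Z ω ^ 2 ∂P) * P {ω | 0 < Z ω} := by
  set S : Set Ω := {ω | 0 < Z ω} with hS
  have hSm : MeasurableSet S := measurableSet_lt measurable_const hZ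
  have hind : ∀ ω, Z ω = Z ω * S.indicator (fun _ => (1:ENNReal)) ω := by
    intro ω
    by_cases h : ω ∈ S
    · simp [Set.indicator_of_mem h]
    · have : Z ω = 0 := by
        simpa [hS, pos_iff_ne_zero, not_not] using h
      simp [this]
  have hcs := ENNReal.lintegral_mul_le_Lp_mul_Lq P (p := 2) (q := 2) (f := Z)
    (g := S.indicator (fun _ => (1:ENNReal)))
    (⟨by norm_num, by norm_num, by norm_num⟩) hZ.aemeasurable
    ((measurable_const.indicator hSm).aemeasurable (μ := P))
  have h1 : ∫⁻ ω, Z ω ∂P ≤ (∫⁻ ω, Z ω ^ (2:ℝ) ∂P) ^ (1/(2:ℝ)) *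
      (∫⁻ ω, (S.indicator (fun _ => (1:ENNReal)) ω) ^ (2:ℝ) ∂P) ^ (1/(2:ℝ)) := by
    calc ∫⁻ ω, Z ω ∂P = ∫⁻ ω, Z ω * S.indicator (fun _ => (1:ENNReal)) ω ∂P := by
          exact lintegral_congr hind
      _ ≤ _ := hcs
  have hind2 : ∀ ω, (S.indicator (fun _ => (1:ENNReal)) ω) ^ (2:ℝ) =
      S.indicator (fun _ => (1:ENNReal)) ω := by
    intro ω
    by_cases h : ω ∈ S <;> simp [Set.indicator_of_mem, Set.indicator_of_notMem, h,
      ENNReal.rpow_two]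
  have hindint : ∫⁻ ω, (S.indicator (fun _ => (1:ENNReal)) ω) ^ (2:ℝ) ∂P = P S := by
    simp only [hind2]
    exact lintegral_indicator_one (μ := P) hSm
  rw [hindint] at h1
  have key : ∀ x : ENNReal, (x ^ (1/(2:ℝ))) ^ (2:ℕ) = x := by
    intro x
    rw [← ENNReal.rpow_natCast, ← ENNReal.rpow_mul]
    norm_num
  have hint2 : ∫⁻ ω, Z ω ^ (2:ℝ) ∂P = ∫⁻ ω, Z ω ^ (2:ℕ) ∂P :=
    lintegral_congr fun ω => ENNReal.rpow_two _
  calc (∫⁻ ω, Z ω ∂P) ^ 2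
      ≤ ((∫⁻ ω, Z ω ^ (2:ℝ) ∂P) ^ (1/(2:ℝ)) * (P S) ^ (1/(2:ℝ))) ^ 2 :=
        pow_le_pow_left' h1 2
    _ = ((∫⁻ ω, Z ω ^ (2:ℝ) ∂P) ^ (1/(2:ℝ))) ^ 2 * ((P S) ^ (1/(2:ℝ))) ^ 2 := mul_pow _ _ 2
    _ = (∫⁻ ω, Z ω ^ 2 ∂P) * P S := by rw [key, key, hint2]

lemma iSup_min_nat_add_one (a : ENNReal) : ⨆ n : ℕ, min a ((n:ENNReal) + 1) = a := by
  refine le_antisymm (iSup_le fun n => min_le_left _ _) ?_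
  by_cases ha : a = ⊤
  · subst ha
    have hmin : ∀ n:ℕ, min (⊤:ENNReal) ((n:ENNReal)+1) = (n:ENNReal)+1 :=
      fun n => min_eq_right le_top
    simp_rw [hmin]
    rw [top_le_iff, eq_top_iff, ← ENNReal.iSup_natCast]
    exact iSup_mono fun n => le_self_add
  · obtain ⟨n, hn⟩ := ENNReal.exists_nat_gt ha
    exact le_iSup_of_le n (le_min le_rfl (hn.le.trans (le_add_right le_rfl)))


/-- **Lower bound for the probability of non-extinction of the conditional measure.**
Under the hypotheses (1)–(3) on the assignment `τ ↦ 𝒞(τ)` of random finite Borel measures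
to finite measures `τ ≪ ν`, the probability that `𝒞(ν)` is nonzero is at least the
`K`-capacity `C_K(ν)`. -/
theorem nonextinction_probability_ge_capacity
    {X : Type*} [MetricSpace X] [CompleteSpace X] [TopologicalSpace.SeparableSpace X]
    [MeasurableSpace X] [BorelSpace X]
    {Ω : Type*} [MeasurableSpace Ω] (P : Measure Ω) [IsProbabilityMeasure P]
    (ν : Measure X) [IsFiniteMeasure ν]
    (K : X → X → ENNReal) (hK : Measurable (Function.uncurry K))
    (C : Measure X → Ω → Measure X)
    (hCfin : ∀ τ : Measure X, τ ≪ ν → ∀ ω, IsFiniteMeasure (C τ ω))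
    (hCmeas : ∀ τ : Measure X, τ ≪ ν →
      ∀ E : Set X, MeasurableSet E → Measurable fun ω => C τ ω E)
    (h1 : ∀ (νs : ℕ → Measure X) (γ : ℕ → NNReal),
      (∀ i, IsFiniteMeasure (νs i)) → (∀ i, νs i ≪ ν) →
      Measure.sum (fun i => (γ i : ENNReal) • νs i) ≤ ν →
      ∀ᵐ ω ∂P, Measure.sum (fun i => (γ i : ENNReal) • C (νs i) ω) ≤ C ν ω)
    (h2 : ∀ τ : Measure X, IsFiniteMeasure τ → τ ≪ ν → kernelEnergy K τ < ⊤ →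
      τ Set.univ ≤ ∫⁻ ω, C τ ω Set.univ ∂P)
    (h3 : ∀ τ : Measure X, IsFiniteMeasure τ → τ ≪ ν →
      ∫⁻ ω, (C τ ω Set.univ) ^ 2 ∂P ≤ kernelEnergy K τ) :
    measureCapacity K ν ≤ P {ω | 0 < C ν ω Set.univ} := by
  rw [measureCapacity]
  refine iSup_le fun τ => iSup_le fun hτp => iSup_le fun hτν => ?_
  by_cases hItop : kernelEnergy K τ = ⊤
  · simp [hItop]
  set I := kernelEnergy K τ with hI
  set p := P {ω | 0 < C ν ω Set.univ} with hp
  set f := τ.rnDeriv ν with hf_def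
  have hf : Measurable f := τ.measurable_rnDeriv ν
  have hτ_eq : ν.withDensity f = τ := τ.withDensity_rnDeriv_eq ν hτν
  set τn : ℕ → Measure X := fun n => ν.withDensity (fun x => min (f x) ((n:ENNReal)+1))
    with hτn_def
  have hτn_le_τ : ∀ n, τn n ≤ τ := by
    intro n
    rw [← hτ_eq]
    exact withDensity_mono (Eventually.of_forall fun x => min_le_left _ _)
  have hτn_fin : ∀ n, IsFiniteMeasure (τn n) := fun n =>
    isFiniteMeasure_of_le τ (hτn_le_τ n)
  have hτn_ac : ∀ n, τn n ≪ ν := fun n => withDensity_absolutelyContinuous _ _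
  have hE : ∀ n, kernelEnergy K (τn n) ≤ I := by
    intro n
    exact lintegral_mono' (hτn_le_τ n) (fun x => lintegral_mono' (hτn_le_τ n) le_rfl)
  -- measurability of the masses
  have hZmeas : ∀ n, Measurable fun ω => C (τn n) ω Set.univ := fun n =>
    hCmeas (τn n) (hτn_ac n) Set.univ MeasurableSet.univ
  -- Step 1: a.e. inclusion of positivity events, via h1
  have hincl : ∀ n, P {ω | 0 < C (τn n) ω Set.univ} ≤ p := by
    intro n
    set g : NNReal := ((n:NNReal)+1)⁻¹ with hg
    have hgE : (g : ENNReal) = ((n:ENNReal)+1)⁻¹ := by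
      rw [hg, ENNReal.coe_inv (add_pos_of_nonneg_of_pos (by positivity) one_pos).ne']
      push_cast
      ring_nf
    set νs : ℕ → Measure X := fun i => if i = 0 then τn n else 0 with hνs
    set γ : ℕ → NNReal := fun i => if i = 0 then g else 0 with hγ
    have hsum_le : Measure.sum (fun i => (γ i : ENNReal) • νs i) ≤ ν := by
      rw [Measure.le_iff]
      intro s hs
      rw [Measure.sum_apply _ hs]
      have : ∀ i, ((γ i : ENNReal) • νs i) s =
          (if i = 0 then (g : ENNReal) * τn n s else 0) := by
        intro i
        by_cases hi : i = 0 <;> simp [hνs, hγ, hi]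
      rw [tsum_congr this, tsum_ite_eq]
      have hbound : τn n s ≤ ((n:ENNReal)+1) * ν s := by
        rw [hτn_def]
        simp only
        rw [withDensity_apply _ hs]
        calc ∫⁻ x in s, min (f x) ((n:ENNReal)+1) ∂ν
            ≤ ∫⁻ _ in s, ((n:ENNReal)+1) ∂ν := lintegral_mono fun x => min_le_right _ _
          _ = ((n:ENNReal)+1) * ν s := by rw [setLIntegral_const]
      calc (g : ENNReal) * τn n s ≤ (g : ENNReal) * (((n:ENNReal)+1) * ν s) :=
            by gcongr
        _ = ((g : ENNReal) * ((n:ENNReal)+1)) * ν s := by ring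
        _ = ν s := by
            rw [hgE, ENNReal.inv_mul_cancel (by simp) (by finiteness), one_mul]
    have hae := h1 νs γ (fun i => by
        by_cases hi : i = 0
        · rw [hνs]; simpa [hi] using hτn_fin n
        · rw [hνs]; simp only [hi, if_false]; infer_instance)
      (fun i => by
        by_cases hi : i = 0
        · rw [hνs]; simpa [hi] using hτn_ac n
        · rw [hνs]; simp [hi, Measure.AbsolutelyContinuous.zero])
      hsum_le
    refine measure_mono_ae ?_
    filter_upwards [hae] with ω hω hpos
    have hle := hω Set.univ
    rw [Measure.sum_apply _ MeasurableSet.univ] at hle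
    have hterm : (g : ENNReal) * C (τn n) ω Set.univ ≤ C ν ω Set.univ := by
      refine le_trans ?_ hle
      have := ENNReal.le_tsum (f := fun i => ((γ i : ENNReal) • C (νs i) ω) Set.univ) 0
      simpa [hνs, hγ] using this
    have hg0 : (0:ENNReal) < g := by
      rw [hgE]
      exact ENNReal.inv_pos.mpr (by finiteness)
    show 0 < C ν ω Set.univ
    calc (0:ENNReal) < (g : ENNReal) * C (τn n) ω Set.univ :=
          ENNReal.mul_pos hg0.ne' hpos.ne'
      _ ≤ _ := hterm
  -- Step 2: Paley–Zygmund for each n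
  have hPZ : ∀ n, (τn n Set.univ) ^ 2 ≤ I * p := by
    intro n
    have hfinE : kernelEnergy K (τn n) < ⊤ :=
      lt_of_le_of_lt (hE n) (lt_top_iff_ne_top.mpr hItop)
    have ha := h2 (τn n) (hτn_fin n) (hτn_ac n) hfinE
    have hb := h3 (τn n) (hτn_fin n) (hτn_ac n)
    have hpz := paley_zygmund P (fun ω => C (τn n) ω Set.univ) (hZmeas n)
    calc (τn n Set.univ) ^ 2 ≤ (∫⁻ ω, C (τn n) ω Set.univ ∂P) ^ 2 :=
          pow_le_pow_left' ha 2
      _ ≤ (∫⁻ ω, (C (τn n) ω Set.univ) ^ 2 ∂P) * P {ω | 0 < C (τn n) ω Set.univ} := hpz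
      _ ≤ I * p := mul_le_mul' (hb.trans (hE n)) (hincl n)
  -- Step 3: sup of masses is 1
  have hmass : ⨆ n, τn n Set.univ = 1 := by
    have : ∀ n, τn n Set.univ = ∫⁻ x, min (f x) ((n:ENNReal)+1) ∂ν := by
      intro n
      rw [hτn_def]
      simp [withDensity_apply _ MeasurableSet.univ]
    simp_rw [this]
    rw [← lintegral_iSup (fun n => hf.min measurable_const)
      (fun i j hij x => min_le_min le_rfl (by
        exact_mod_cast Nat.add_le_add_right hij 1))]
    simp_rw [iSup_min_nat_add_one]
    rw [show ∫⁻ x, f x ∂ν = (ν.withDensity f) Set.univ by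
      rw [withDensity_apply _ MeasurableSet.univ]; simp]
    rw [hτ_eq]
    exact measure_univ
  -- Step 4: conclude 1 ≤ I * p
  have hone : (1:ENNReal) ≤ I * p := by
    have hmul : (⨆ n, τn n Set.univ) * (⨆ n, τn n Set.univ) ≤ I * p := by
      rw [ENNReal.iSup_mul]
      refine iSup_le fun i => ?_
      rw [ENNReal.mul_iSup]
      refine iSup_le fun j => ?_
      have hmono : Monotone fun n => τn n Set.univ := by
        intro a b hab
        exact withDensity_mono (Eventually.of_forall fun x =>
          min_le_min le_rfl (by exact_mod_cast Nat.add_le_add_right hab 1))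
          Set.univ
      calc τn i Set.univ * τn j Set.univ
          ≤ τn (max i j) Set.univ * τn (max i j) Set.univ :=
            mul_le_mul' (hmono (le_max_left i j)) (hmono (le_max_right i j))
        _ = (τn (max i j) Set.univ) ^ 2 := (sq _).symm
        _ ≤ I * p := hPZ _
    rw [hmass, one_mul] at hmul
    exact hmul
  have hI0 : I ≠ 0 := by
    intro h
    rw [h, zero_mul] at hone
    exact (by simp : ¬ (1:ENNReal) ≤ 0) hone
  calc I⁻¹ = I⁻¹ * 1 := (mul_one _).symm
    _ ≤ I⁻¹ * (I * p) := by gcongr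
    _ = (I⁻¹ * I) * p := (mul_assoc _ _ _).symm
    _ = p := by rw [ENNReal.inv_mul_cancel hI0 hItop, one_mul]
end
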